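/- Ascent direction property: let R, G be strictly convex compact sets, p nonzero with ρ_lower(p) ≥ 0 and δ(p) > 0, and set q = (s_G(−p) − s_R(p))/‖s_G(−p) − s_R(p)‖ − p. Then the directional derivative of ρ_lower at p in direction q equals δ(p)(ρ_upper(p) + ρ_lower(p)) / (‖p‖ ρ_upper(p)) and is strictly positive; consequently there exists γ̃ > 0 such that ρ_lower(p + γq) > ρ_lower(p) for all γ ∈ (0, γ̃). -/

import Mathlib

open RealInnerProductSpace Filter Topology

variable {E : Type*} [NormedAddCommGroup E] [InnerProductSpace ℝ E]

lemma argmax_tendsto {K : Set E} (hK : IsCompact K) (s : E → E)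
    (hs : ∀ p : E, p ≠ 0 → s p ∈ K ∧ IsMaxOn (fun x => ⟪p, x⟫) K (s p))
    (huniq : ∀ p : E, p ≠ 0 → ∀ x ∈ K, IsMaxOn (fun y => ⟪p, y⟫) K x → x = s p)
    {p : E} (hp : p ≠ 0) : Tendsto s (𝓝 p) (𝓝 (s p)) := by
  obtain ⟨C, hC⟩ := hK.isBounded.exists_norm_le
  set C' : ℝ := max C 0 + 1 with hC'
  have hC'pos : 0 < C' := by positivity
  have hCle : ∀ x ∈ K, ‖x‖ ≤ C' := fun x hx =>
    (hC x hx).trans (by simp [hC']; linarith [le_max_left C 0])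
  rw [Metric.tendsto_nhds]
  intro ε hε
  set Kε := K \ Metric.ball (s p) ε with hKε
  have hKεc : IsCompact Kε := hK.diff Metric.isOpen_ball
  have hpn : 0 < ‖p‖ := norm_pos_iff.2 hp
  by_cases hne : Kε.Nonempty
  · have hcont : Continuous fun x : E => ⟪p, x⟫ := continuous_const.inner continuous_id
    obtain ⟨x0, hx0K, hx0max⟩ := hKεc.exists_isMaxOn hne hcont.continuousOn
    have hx0lt : ⟪p, x0⟫ < ⟪p, s p⟫ := by
      rcases lt_or_ge ⟪p, x0⟫ ⟪p, s p⟫ with h | h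
      · exact h
      · exfalso
        have hmax : IsMaxOn (fun y => ⟪p, y⟫) K x0 := fun y hy =>
          le_trans ((hs p hp).2 hy) h
        have := huniq p hp x0 hx0K.1 hmax
        have : x0 ∈ Metric.ball (s p) ε := by
          rw [this]; exact Metric.mem_ball_self hε
        exact hx0K.2 this
    set d : ℝ := ⟪p, s p⟫ - ⟪p, x0⟫ with hd
    have hdpos : 0 < d := by simp [hd]; linarith
    set δ : ℝ := min ‖p‖ (d / (2 * C')) with hδdef
    have hδpos : 0 < δ := lt_min hpn (by positivity)
    filter_upwards [Metric.ball_mem_nhds p hδpos] with p' hp'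
    have hdist : ‖p' - p‖ < δ := by
      rw [← dist_eq_norm]; exact hp'
    have hp'0 : p' ≠ 0 := by
      intro h
      rw [h, zero_sub, norm_neg] at hdist
      exact absurd (hdist.trans_le (min_le_left _ _)) (lt_irrefl _)
    obtain ⟨hmem, hmax⟩ := hs p' hp'0
    have hnotin : s p' ∉ Kε := by
      intro hin
      have h1 : ⟪p, s p'⟫ ≤ ⟪p, x0⟫ := hx0max hin
      have h2 : ⟪p', s p⟫ ≤ ⟪p', s p'⟫ := hmax (hs p hp).1
      have h3 : |⟪p' - p, s p⟫| ≤ ‖p' - p‖ * C' :=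
        (abs_real_inner_le_norm _ _).trans
          (mul_le_mul_of_nonneg_left (hCle _ (hs p hp).1) (norm_nonneg _))
      have h4 : |⟪p' - p, s p'⟫| ≤ ‖p' - p‖ * C' :=
        (abs_real_inner_le_norm _ _).trans
          (mul_le_mul_of_nonneg_left (hCle _ hmem) (norm_nonneg _))
      have e1 : ⟪p', s p⟫ = ⟪p, s p⟫ + ⟪p' - p, s p⟫ := by
        rw [← inner_add_left]; congr 1; abel
      have e2 : ⟪p', s p'⟫ = ⟪p, s p'⟫ + ⟪p' - p, s p'⟫ := by
        rw [← inner_add_left]; congr 1; abel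
      have hsmall : ‖p' - p‖ * C' < d / 2 := by
        have : ‖p' - p‖ < d / (2 * C') := hdist.trans_le (min_le_right _ _)
        calc ‖p' - p‖ * C' < d / (2 * C') * C' :=
              mul_lt_mul_of_pos_right this hC'pos
          _ = d / 2 := by field_simp
      have := abs_le.1 h3
      have := abs_le.1 h4
      simp [hd] at hdpos
      nlinarith [abs_le.1 h3, abs_le.1 h4]
    have : s p' ∈ Metric.ball (s p) ε := by
      by_contra h
      exact hnotin ⟨hmem, h⟩
    exact this
  · -- Kε empty : K ⊆ ball
    have hsub : K ⊆ Metric.ball (s p) ε := by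
      intro x hx
      by_contra h
      exact hne ⟨x, hx, h⟩
    filter_upwards [eventually_ne_nhds hp] with p' hp'0
    exact hsub (hs p' hp'0).1

lemma support_hasDerivAt {K : Set E} (hK : IsCompact K) (s : E → E)
    (hs : ∀ p : E, p ≠ 0 → s p ∈ K ∧ IsMaxOn (fun x => ⟪p, x⟫) K (s p))
    (huniq : ∀ p : E, p ≠ 0 → ∀ x ∈ K, IsMaxOn (fun y => ⟪p, y⟫) K x → x = s p)
    {p : E} (hp : p ≠ 0) (q : E) :
    HasDerivAt (fun γ : ℝ => ⟪p + γ • q, s (p + γ • q)⟫) ⟪q, s p⟫ 0 := by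
  have hu : Tendsto (fun γ : ℝ => p + γ • q) (𝓝 0) (𝓝 p) := by
    have : Continuous (fun γ : ℝ => p + γ • q) := by continuity
    have := this.tendsto 0
    simpa using this
  have hne : ∀ᶠ γ : ℝ in 𝓝 0, p + γ • q ≠ 0 := hu.eventually (eventually_ne_nhds hp)
  have hst : Tendsto (fun γ : ℝ => s (p + γ • q)) (𝓝 0) (𝓝 (s p)) :=
    (argmax_tendsto hK s hs huniq hp).comp hu
  rw [hasDerivAt_iff_tendsto_slope]
  rw [tendsto_iff_dist_tendsto_zero]
  refine squeeze_zero' (g := fun γ : ℝ => |⟪q, s (p + γ • q)⟫ - ⟪q, s p⟫|)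
    (Filter.Eventually.of_forall fun t => dist_nonneg) ?_ ?_
  · filter_upwards [eventually_nhdsWithin_of_eventually_nhds hne,
      self_mem_nhdsWithin] with γ huγ hγ0
    have hγ0 : γ ≠ 0 := hγ0
    set f : ℝ → ℝ := fun γ : ℝ => ⟪p + γ • q, s (p + γ • q)⟫ with hf
    set L : ℝ := ⟪q, s p⟫ with hL
    set X : ℝ := ⟪q, s (p + γ • q)⟫ with hX
    have hlow : γ * L ≤ f γ - f 0 := by
      have h1 : ⟪p + γ • q, s p⟫ ≤ f γ := (hs _ huγ).2 (hs p hp).1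
      have h2 : f 0 = ⟪p, s p⟫ := by simp [hf]
      have : ⟪p + γ • q, s p⟫ = ⟪p, s p⟫ + γ * L := by
        rw [inner_add_left, real_inner_smul_left]
      linarith
    have hhigh : f γ - f 0 ≤ γ * X := by
      have h1 : ⟪p, s (p + γ • q)⟫ ≤ f 0 := by
        have := (hs p hp).2 (hs _ huγ).1
        simpa [hf] using this
      have : f γ = ⟪p, s (p + γ • q)⟫ + γ * X := by
        rw [hf]; simp only [inner_add_left, real_inner_smul_left, hX]
      linarith
    rw [Real.dist_eq, slope_def_field]
    have hslope : (f γ - f 0) / (γ - 0) - L = ((f γ - f 0) - γ * L) / γ := by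
      field_simp; ring
    rw [hslope]
    rcases lt_or_gt_of_ne hγ0 with h | h
    · have hub : ((f γ - f 0) - γ * L) / γ ≤ 0 :=
        div_nonpos_of_nonneg_of_nonpos (by linarith) h.le
      have hlb : X - L ≤ ((f γ - f 0) - γ * L) / γ := by
        rw [le_div_iff_of_neg h]
        nlinarith
      rw [abs_of_nonpos hub]
      calc -(((f γ - f 0) - γ * L) / γ) ≤ -(X - L) := by linarith
        _ ≤ |X - L| := by rw [abs_sub_comm, neg_sub]; exact le_abs_self _
    · have hlb : 0 ≤ ((f γ - f 0) - γ * L) / γ :=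
        div_nonneg (by linarith) h.le
      have hub : ((f γ - f 0) - γ * L) / γ ≤ X - L := by
        rw [div_le_iff₀ h]
        nlinarith
      rw [abs_of_nonneg hlb]
      exact hub.trans (le_abs_self _)
  · have : Tendsto (fun γ : ℝ => |⟪q, s (p + γ • q)⟫ - ⟪q, s p⟫|) (𝓝 0) (𝓝 0) := by
      have h1 : Tendsto (fun γ : ℝ => ⟪q, s (p + γ • q)⟫) (𝓝 0) (𝓝 ⟪q, s p⟫) :=
        ((continuous_const.inner continuous_id).tendsto _).comp hst
      have h2 := h1.sub_const ⟪q, s p⟫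
      simpa using h2.abs
    exact this.mono_left nhdsWithin_le_nhds

/-- Ascent direction property (Eaton): with `q = (s_G(-p) - s_R(p))/ρ_upper(p) - p`,
the directional derivative of `ρ_lower` at `p` in direction `q` equals
`δ(p)(ρ_upper(p) + ρ_lower(p)) / (‖p‖ ρ_upper(p))`, is strictly positive, and hence
`ρ_lower(p + γq) > ρ_lower(p)` for all small enough `γ > 0`. -/
theorem ascent_direction {n : ℕ} (R G : Set (EuclideanSpace ℝ (Fin n)))
    (hRc : IsCompact R) (hRs : StrictConvex ℝ R)
    (hGc : IsCompact G) (hGs : StrictConvex ℝ G)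
    (sR sG : EuclideanSpace ℝ (Fin n) → EuclideanSpace ℝ (Fin n))
    (hsR : ∀ p : EuclideanSpace ℝ (Fin n), p ≠ 0 →
      sR p ∈ R ∧ IsMaxOn (fun s => ⟪p, s⟫) R (sR p))
    (hsG : ∀ p : EuclideanSpace ℝ (Fin n), p ≠ 0 →
      sG p ∈ G ∧ IsMaxOn (fun s => ⟪p, s⟫) G (sG p))
    (huniqR : ∀ p : EuclideanSpace ℝ (Fin n), p ≠ 0 →
      ∀ s ∈ R, IsMaxOn (fun x => ⟪p, x⟫) R s → s = sR p)
    (huniqG : ∀ p : EuclideanSpace ℝ (Fin n), p ≠ 0 →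
      ∀ s ∈ G, IsMaxOn (fun x => ⟪p, x⟫) G s → s = sG p)
    (p : EuclideanSpace ℝ (Fin n)) (hp : p ≠ 0)
    (ρl ρu : ℝ)
    (hρl : ρl = ⟪p, sG (-p) - sR p⟫ / ‖p‖)
    (hρu : ρu = ‖sG (-p) - sR p‖)
    (hρl0 : 0 ≤ ρl) (hδ : 0 < ρu - ρl)
    (q : EuclideanSpace ℝ (Fin n))
    (hq : q = ρu⁻¹ • (sG (-p) - sR p) - p) :
    HasDerivAt (fun γ : ℝ => ⟪p + γ • q, sG (-(p + γ • q)) - sR (p + γ • q)⟫ / ‖p + γ • q‖)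
        ((ρu - ρl) * (ρu + ρl) / (‖p‖ * ρu)) 0 ∧
      0 < (ρu - ρl) * (ρu + ρl) / (‖p‖ * ρu) ∧
      ∃ γt : ℝ, 0 < γt ∧ ∀ γ : ℝ, 0 < γ → γ < γt →
        ⟪p, sG (-p) - sR p⟫ / ‖p‖ <
          ⟪p + γ • q, sG (-(p + γ • q)) - sR (p + γ • q)⟫ / ‖p + γ • q‖ := by
  have hp0 : (0:ℝ) < ‖p‖ := norm_pos_iff.2 hp
  have hρu0 : 0 < ρu := by linarith
  -- the G-part derivative
  have hA : HasDerivAt (fun γ : ℝ => ⟪(-p) + γ • (-q), sG ((-p) + γ • (-q))⟫)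
      ⟪-q, sG (-p)⟫ 0 := support_hasDerivAt hGc sG hsG huniqG (neg_ne_zero.2 hp) (-q)
  have hA' : HasDerivAt (fun γ : ℝ => ⟪-(p + γ • q), sG (-(p + γ • q))⟫)
      ⟪-q, sG (-p)⟫ 0 := by
    have heq : (fun γ : ℝ => ⟪-(p + γ • q), sG (-(p + γ • q))⟫)
        = (fun γ : ℝ => ⟪(-p) + γ • (-q), sG ((-p) + γ • (-q))⟫) := by
      funext γ
      rw [show -(p + γ • q) = (-p) + γ • (-q) by rw [neg_add, smul_neg]]
    rw [heq]; exact hA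
  have hB : HasDerivAt (fun γ : ℝ => ⟪p + γ • q, sR (p + γ • q)⟫) ⟪q, sR p⟫ 0 :=
    support_hasDerivAt hRc sR hsR huniqR hp q
  have hN : HasDerivAt (fun γ : ℝ => ⟪p + γ • q, sG (-(p + γ • q)) - sR (p + γ • q)⟫)
      (⟪q, sG (-p) - sR p⟫) 0 := by
    have heq : (fun γ : ℝ => ⟪p + γ • q, sG (-(p + γ • q)) - sR (p + γ • q)⟫)
        = (fun γ : ℝ => (-⟪-(p + γ • q), sG (-(p + γ • q))⟫)
            - ⟪p + γ • q, sR (p + γ • q)⟫) := by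
      funext γ
      rw [inner_sub_right, inner_neg_left, neg_neg]
    rw [heq, show (⟪q, sG (-p) - sR p⟫ : ℝ) = -⟪-q, sG (-p)⟫ - ⟪q, sR p⟫ by
      rw [inner_sub_right, inner_neg_left, neg_neg]]
    exact hA'.neg.sub hB
  -- derivative of the norm of the line
  have hlin : HasDerivAt (fun γ : ℝ => p + γ • q) q 0 := by
    simpa using ((hasDerivAt_id (0:ℝ)).smul_const q).const_add p
  have hinner : HasDerivAt (fun γ : ℝ => ⟪p + γ • q, p + γ • q⟫) (2 * ⟪p, q⟫) 0 := by
    convert HasDerivAt.inner ℝ hlin hlin using 1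
    case e'_9 =>
      simp only [zero_smul, add_zero]
      rw [two_mul, real_inner_comm q p]
    all_goals rfl
  have hppne : (⟪p, p⟫ : ℝ) ≠ 0 := by
    rw [real_inner_self_eq_norm_mul_norm]; positivity
  have hden : HasDerivAt (fun γ : ℝ => ‖p + γ • q‖) (⟪p, q⟫ / ‖p‖) 0 := by
    have heq : (fun γ : ℝ => ‖p + γ • q‖)
        = (fun γ : ℝ => Real.sqrt ⟪p + γ • q, p + γ • q⟫) := by
      funext γ
      rw [real_inner_self_eq_norm_mul_norm, Real.sqrt_mul_self (norm_nonneg _)]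
    rw [heq]
    have hx0 : (fun γ : ℝ => (⟪p + γ • q, p + γ • q⟫ : ℝ)) 0 ≠ 0 := by
      simpa using hppne
    have hcomp := hinner.sqrt hx0
    convert hcomp using 1
    simp only [zero_smul, add_zero]
    rw [real_inner_self_eq_norm_mul_norm, Real.sqrt_mul_self (norm_nonneg _)]
    field_simp
  have hden0 : ‖p + (0:ℝ) • q‖ ≠ 0 := by simp [hp]
  have hf := hN.div hden hden0
  -- compute the derivative value
  have hpD : (⟪p, sG (-p) - sR p⟫ : ℝ) = ρl * ‖p‖ := by
    rw [hρl]; field_simp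
  have hDD : (⟪sG (-p) - sR p, sG (-p) - sR p⟫ : ℝ) = ρu * ρu := by
    rw [real_inner_self_eq_norm_mul_norm, hρu]
  have hqD : (⟪q, sG (-p) - sR p⟫ : ℝ) = ρu⁻¹ * (ρu * ρu) - ρl * ‖p‖ := by
    rw [hq, inner_sub_left, real_inner_smul_left, hDD, hpD]
  have hpq : (⟪p, q⟫ : ℝ) = ρu⁻¹ * (ρl * ‖p‖) - ‖p‖ * ‖p‖ := by
    rw [hq, inner_sub_right, real_inner_smul_right, real_inner_self_eq_norm_mul_norm, hpD]
  have hval : (⟪q, sG (-p) - sR p⟫ * ‖p + (0:ℝ) • q‖ -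
      ⟪p + (0:ℝ) • q, sG (-(p + (0:ℝ) • q)) - sR (p + (0:ℝ) • q)⟫ * (⟪p, q⟫ / ‖p‖))
        / ‖p + (0:ℝ) • q‖ ^ 2 = (ρu - ρl) * (ρu + ρl) / (‖p‖ * ρu) := by
    have h0 : p + (0:ℝ) • q = p := by simp
    rw [h0, hqD, hpD, hpq]
    field_simp
    ring
  rw [hval] at hf
  have hcpos : 0 < (ρu - ρl) * (ρu + ρl) / (‖p‖ * ρu) :=
    div_pos (mul_pos hδ (by linarith)) (mul_pos hp0 hρu0)
  refine ⟨hf, hcpos, ?_⟩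
  -- small positive steps increase the objective
  set f : ℝ → ℝ := fun γ : ℝ =>
    ⟪p + γ • q, sG (-(p + γ • q)) - sR (p + γ • q)⟫ / ‖p + γ • q‖ with hfdef
  have hf0 : f 0 = ⟪p, sG (-p) - sR p⟫ / ‖p‖ := by simp [hfdef]
  have hslope := hasDerivAt_iff_tendsto_slope.1 hf
  have hev : ∀ᶠ γ in 𝓝[≠] (0:ℝ), 0 < slope f 0 γ :=
    hslope.eventually (eventually_gt_nhds hcpos)
  rw [eventually_nhdsWithin_iff] at hev
  rw [Metric.eventually_nhds_iff] at hev
  obtain ⟨γt, hγt, hball⟩ := hev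
  refine ⟨γt, hγt, fun γ hγ0 hγlt => ?_⟩
  have hdist : dist γ 0 < γt := by
    rw [Real.dist_eq, sub_zero, abs_of_pos hγ0]; exact hγlt
  have hsl := hball hdist (by simpa using hγ0.ne' : γ ∈ ({0}ᶜ : Set ℝ))
  rw [slope_def_field, sub_zero] at hsl
  have : 0 < f γ - f 0 := by
    have := mul_pos hsl hγ0
    rwa [div_mul_cancel₀ _ hγ0.ne'] at this
  rw [← hf0]
  linarith
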